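/- Let u be a unit vector in ℝ^n and let p ∈ ℝ^n with 0 < ‖p‖ ≤ q satisfy ⟨p/‖p‖, u⟩ = −1 + ε for some ε ∈ [ε_min, ε_max] ⊂ (0, 1). Define d = p − ⟨p, u⟩·u and λ^SC = ‖p‖²/‖d‖². Then ‖λ^SC·d‖ ≤ q/√(2·ε_min − ε_min²). In particular, the surrogate constraint perturbation vectors v^k = λ^SC_k·d^SC are bounded in norm by q/√(2·ε_min − ε_min²). -/

import Mathlib

open scoped RealInnerProductSpace

/-- For a unit vector `u` and `p` with `0 < ‖p‖ ≤ q` and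
`⟪p/‖p‖, u⟫ = -1 + ε`, `ε ∈ [εmin, εmax] ⊂ (0,1)`, the surrogate constraint
perturbation `λ^SC • d` with `d = p - ⟪p, u⟫ • u` and `λ^SC = ‖p‖²/‖d‖²`
satisfies `‖λ^SC • d‖ ≤ q / √(2 εmin - εmin²)`. -/
theorem surrogate_constraint_perturbation_bounded {n : ℕ}
    (u : EuclideanSpace ℝ (Fin n)) (hu : ‖u‖ = 1)
    (p : EuclideanSpace ℝ (Fin n)) (q : ℝ)
    (hp0 : 0 < ‖p‖) (hpq : ‖p‖ ≤ q)
    (ε εmin εmax : ℝ)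
    (hmin : 0 < εmin) (hε1 : εmin ≤ ε) (hε2 : ε ≤ εmax) (hmax : εmax < 1)
    (hangle : ⟪‖p‖⁻¹ • p, u⟫ = -1 + ε)
    (d : EuclideanSpace ℝ (Fin n)) (hd : d = p - ⟪p, u⟫ • u)
    (lamSC : ℝ) (hlam : lamSC = ‖p‖ ^ 2 / ‖d‖ ^ 2) :
    ‖lamSC • d‖ ≤ q / Real.sqrt (2 * εmin - εmin ^ 2) := by
  have hpu : ⟪p, u⟫ = ‖p‖ * (-1 + ε) := by
    rw [real_inner_smul_left, inv_mul_eq_div, div_eq_iff hp0.ne'] at hangle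
    linarith
  have hε01 : ε < 1 := lt_of_le_of_lt hε2 hmax
  have hεpos : 0 < ε := lt_of_lt_of_le hmin hε1
  have hspos : 0 < 2 * ε - ε ^ 2 := by nlinarith
  have hsmin : 0 < 2 * εmin - εmin ^ 2 := by nlinarith
  have hdn : ‖d‖ ^ 2 = ‖p‖ ^ 2 * (2 * ε - ε ^ 2) := by
    rw [hd, @norm_sub_sq_real, real_inner_smul_right, norm_smul, hu, hpu]
    simp only [Real.norm_eq_abs, mul_pow, sq_abs, mul_one, norm_norm]
    ring
  have hdpos : 0 < ‖d‖ := by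
    have h2 : 0 < ‖d‖ ^ 2 := by rw [hdn]; positivity
    nlinarith [norm_nonneg d]
  have hdval : ‖d‖ = ‖p‖ * Real.sqrt (2 * ε - ε ^ 2) := by
    have : Real.sqrt (‖d‖ ^ 2) = Real.sqrt (‖p‖ ^ 2 * (2 * ε - ε ^ 2)) := by
      rw [hdn]
    rwa [Real.sqrt_sq (norm_nonneg d), Real.sqrt_mul (by positivity),
      Real.sqrt_sq hp0.le] at this
  have hnorm : ‖lamSC • d‖ = ‖p‖ / Real.sqrt (2 * ε - ε ^ 2) := by
    rw [norm_smul, hlam, Real.norm_eq_abs, abs_of_nonneg (by positivity)]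
    rw [hdval]
    have hsq : 0 < Real.sqrt (2 * ε - ε ^ 2) := Real.sqrt_pos.mpr hspos
    field_simp
  rw [hnorm]
  have hmono : Real.sqrt (2 * εmin - εmin ^ 2) ≤ Real.sqrt (2 * ε - ε ^ 2) :=
    Real.sqrt_le_sqrt (by nlinarith)
  have h1 : 0 < Real.sqrt (2 * εmin - εmin ^ 2) := Real.sqrt_pos.mpr hsmin
  exact div_le_div₀ (le_trans hp0.le hpq) hpq h1 hmono
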